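/- Let G be a finite nonabelian ea-morphic p-group and K = ⋂{M' : M maximal subgroup of G}. Then [G, Φ(G)] ≤ K; in particular Φ(G)' ≤ K. -/

import Mathlib

/-- A group is elementary abelian for the prime `p` if it is commutative and every
element has order dividing `p`. -/
def IsElementaryAbelian (p : ℕ) (G : Type*) [Group G] : Prop :=
  (∀ a b : G, a * b = b * a) ∧ ∀ g : G, g ^ p = 1

/-- A finite `p`-group `G` is ea-morphic if, whenever `N ⊴ G` with `N` elementary abelian
or `G/N` elementary abelian, there is an epimorphism `φ : G → N` with `G/N ≅ ker φ`. -/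
def IsEAMorphic (p : ℕ) (G : Type*) [Group G] : Prop :=
  ∀ N : Subgroup G, ∀ _hN : N.Normal,
    (IsElementaryAbelian p N ∨ IsElementaryAbelian p (G ⧸ N)) →
    ∃ φ : G →* N, Function.Surjective φ ∧ Nonempty ((G ⧸ N) ≃* φ.ker)

/-- The derived subgroup of a subgroup `M` of `G`, viewed as a subgroup of `G`. -/
def derivedIn {G : Type*} [Group G] (M : Subgroup G) : Subgroup G :=
  (commutator ↥M).map M.subtype

section Auxiliary

variable {G : Type*} [Group G]

open scoped commutatorElement

lemma derivedIn_eq (M : Subgroup G) : derivedIn M = ⁅M, M⁆ := by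
  rw [derivedIn, commutator_def, Subgroup.map_commutator, ← MonoidHom.range_eq_map,
    Subgroup.range_subtype]

/-- A subgroup of prime index is a maximal subgroup. -/
lemma isCoatom_of_index_prime {p : ℕ} (hp : p.Prime) {K : Subgroup G} (hK : K.index = p) :
    IsCoatom K := by
  constructor
  · intro h
    rw [h, Subgroup.index_top] at hK
    exact hp.one_lt.ne' hK.symm
  · intro H hH
    have hdvd : H.index ∣ p := hK ▸ Subgroup.index_dvd_of_le hH.le
    rcases hp.eq_one_or_self_of_dvd _ hdvd with h1 | hp'
    · exact Subgroup.index_eq_one.mp h1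
    · exfalso
      have hmul := Subgroup.relIndex_mul_index hH.le
      rw [hp', hK] at hmul
      have hone : K.relIndex H = 1 :=
        Nat.eq_of_mul_eq_mul_right hp.pos (by rw [hmul, one_mul])
      exact hH.2 (Subgroup.relIndex_eq_one.mp hone)

/-- If `G/N` is elementary abelian then the Frattini subgroup is contained in `N`. -/
lemma frattini_le_of_elementaryAbelian_quotient [Finite G] {p : ℕ} (hp : p.Prime)
    (N : Subgroup G) [N.Normal] (hcomm : ∀ a b : G ⧸ N, a * b = b * a)
    (hexp : ∀ a : G ⧸ N, a ^ p = 1) : frattini G ≤ N := by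
  intro g hg
  by_contra hgN
  haveI : Fact p.Prime := ⟨hp⟩
  letI : CommGroup (G ⧸ N) := { (inferInstance : Group (G ⧸ N)) with mul_comm := hcomm }
  letI : Module (ZMod p) (Additive (G ⧸ N)) := AddCommGroup.zmodModule (by
    intro x
    refine Additive.toMul.injective ?_
    rw [toMul_nsmul]
    exact hexp _)
  have hv : (Additive.ofMul ((g : G ⧸ N))) ≠ 0 :=
    fun h0 => hgN ((QuotientGroup.eq_one_iff g).mp h0)
  obtain ⟨f, hf⟩ : ∃ f : Additive (G ⧸ N) →ₗ[ZMod p] ZMod p,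
      @DFunLike.coe _ _ _ LinearMap.instFunLike f (Additive.ofMul ((g : G ⧸ N))) ≠ 0 := by
    by_contra h
    push_neg at h
    exact hv ((Module.forall_dual_apply_eq_zero_iff (ZMod p) _).mp h)
  let χ : (G ⧸ N) →* Multiplicative (ZMod p) := AddMonoidHom.toMultiplicativeRight f.toAddMonoidHom
  set K := (χ.comp (QuotientGroup.mk' N)).ker with hKdef
  have hgK : g ∉ K := by
    intro h
    rw [hKdef, MonoidHom.mem_ker] at h
    exact hf h
  have hKi : K.index = p := by
    have h1 : K.index ∣ p := by
      rw [hKdef, Subgroup.index_ker]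
      calc Nat.card (χ.comp (QuotientGroup.mk' N)).range
          ∣ Nat.card (Multiplicative (ZMod p)) := Subgroup.card_subgroup_dvd_card _
        _ = p := by
            rw [Nat.card_congr (Multiplicative.toAdd (α := ZMod p)), Nat.card_zmod]
    rcases hp.eq_one_or_self_of_dvd _ h1 with h1' | h1'
    · exact absurd (Subgroup.index_eq_one.mp h1' ▸ Subgroup.mem_top g) hgK
    · exact h1'
  exact hgK (frattini_le_coatom (isCoatom_of_index_prime hp hKi) hg)

/-- A maximal subgroup of a finite `p`-group has index `p`. -/
lemma index_eq_prime_of_coatom [Finite G] {p : ℕ} (hp : p.Prime) (hpG : IsPGroup p G)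
    {M : Subgroup G} (hM : IsCoatom M) [M.Normal] : M.index = p := by
  haveI : Fact p.Prime := ⟨hp⟩
  have hQ : IsPGroup p (G ⧸ M) := hpG.to_quotient M
  obtain ⟨g, hg⟩ : ∃ g : G, g ∉ M := by
    by_contra h
    push_neg at h
    exact hM.1 ((Subgroup.eq_top_iff' M).mpr h)
  set y : G ⧸ M := (g : G ⧸ M) with hy_def
  have hy : y ≠ 1 := by
    rw [hy_def, Ne, QuotientGroup.eq_one_iff]
    exact hg
  obtain ⟨k, hk⟩ := hQ y
  obtain ⟨m, hmk, hm⟩ := (Nat.dvd_prime_pow hp).mp (orderOf_dvd_of_pow_eq_one hk)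
  have hm0 : m ≠ 0 := by
    rintro rfl
    rw [pow_zero] at hm
    exact hy (orderOf_eq_one_iff.mp hm)
  set x := y ^ (p ^ (m - 1)) with hx
  have hxp : x ^ p = 1 := by
    rw [hx, ← pow_mul, ← pow_succ, Nat.sub_add_cancel (Nat.one_le_iff_ne_zero.mpr hm0), ← hm]
    exact pow_orderOf_eq_one y
  have hx1 : x ≠ 1 := by
    intro h
    have hdvd : orderOf y ∣ p ^ (m - 1) := orderOf_dvd_of_pow_eq_one (hx ▸ h)
    rw [hm] at hdvd
    have := (Nat.pow_dvd_pow_iff_le_right hp.one_lt).mp hdvd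
    omega
  have hxo : orderOf x = p := orderOf_eq_prime hxp hx1
  have htop : Subgroup.zpowers x = ⊤ := by
    set H := Subgroup.comap (QuotientGroup.mk' M) (Subgroup.zpowers x) with hH
    have hle : M ≤ H := by
      intro m hm'
      rw [hH, Subgroup.mem_comap]
      have : (QuotientGroup.mk' M) m = 1 := (QuotientGroup.eq_one_iff m).mpr hm'
      rw [this]
      exact Subgroup.one_mem _
    obtain ⟨t, ht⟩ := QuotientGroup.mk'_surjective M x
    have htH : t ∈ H := by
      rw [hH, Subgroup.mem_comap, ht]
      exact Subgroup.mem_zpowers x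
    have htM : t ∉ M := by
      intro hcon
      apply hx1
      rw [← ht]
      exact (QuotientGroup.eq_one_iff t).mpr hcon
    have hHtop : H = ⊤ := hM.2 H (lt_of_le_of_ne hle (fun h => htM (h ▸ htH)))
    rw [eq_top_iff]
    intro q _
    obtain ⟨s, hs⟩ := QuotientGroup.mk'_surjective M q
    have : s ∈ H := hHtop ▸ Subgroup.mem_top s
    rw [hH, Subgroup.mem_comap] at this
    rw [← hs]
    exact this
  rw [Subgroup.index_eq_card]
  calc Nat.card (G ⧸ M) = Nat.card (⊤ : Subgroup (G ⧸ M)) := (Subgroup.card_top).symm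
    _ = Nat.card (Subgroup.zpowers x) := by rw [htop]
    _ = orderOf x := Nat.card_zpowers x
    _ = p := hxo

/-- A normal subgroup of order `p` in a finite `p`-group is central. -/
lemma le_center_of_card_eq_prime [Finite G] {p : ℕ} (hp : p.Prime) (hpG : IsPGroup p G)
    {D : Subgroup G} [D.Normal] (hD : Nat.card D = p) : D ≤ Subgroup.center G := by
  haveI : Fact p.Prime := ⟨hp⟩
  letI : MulAction G ↥D := MulAction.compHom ↥D (MulAut.conjNormal (H := D))
  have key := hpG.card_modEq_card_fixedPoints (↥D)
  rw [hD] at key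
  have h1 : (1 : ↥D) ∈ MulAction.fixedPoints G ↥D := by
    intro gq
    show MulAut.conjNormal gq (1 : ↥D) = 1
    exact map_one _
  haveI : Nonempty ↥(MulAction.fixedPoints G ↥D) := ⟨⟨1, h1⟩⟩
  have hdvd : p ∣ Nat.card (MulAction.fixedPoints G ↥D) :=
    (Nat.modEq_zero_iff_dvd).mp (key.symm.trans (Nat.modEq_zero_iff_dvd.mpr dvd_rfl))
  have hpos : 0 < Nat.card (MulAction.fixedPoints G ↥D) := Nat.card_pos
  have hge : p ≤ Nat.card (MulAction.fixedPoints G ↥D) := Nat.le_of_dvd hpos hdvd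
  have huniv : MulAction.fixedPoints G ↥D = Set.univ := by
    apply Set.eq_of_subset_of_ncard_le (Set.subset_univ _)
    rw [Set.ncard_univ, hD, ← Nat.card_coe_set_eq]
    exact hge
  intro d hd
  rw [Subgroup.mem_center_iff]
  intro g
  have hmem : (⟨d, hd⟩ : ↥D) ∈ MulAction.fixedPoints G ↥D := huniv ▸ Set.mem_univ _
  have hfix : MulAut.conjNormal g (⟨d, hd⟩ : ↥D) = ⟨d, hd⟩ := hmem g
  have hval : g * d * g⁻¹ = d := by
    have := congrArg Subtype.val hfix
    rwa [MulAut.conjNormal_apply] at this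
  calc g * d = (g * d * g⁻¹) * g := by group
    _ = d * g := by rw [hval]

/-- Key bound: for an ea-morphic finite `p`-group and a maximal subgroup `M`,
`[G, Φ(G)] ≤ M'`. -/
lemma commutator_frattini_le_derivedIn {p : ℕ} (hp : p.Prime) [Finite G]
    (hpG : IsPGroup p G) (hea : IsEAMorphic p G) {M : Subgroup G} (hM : IsCoatom M) :
    ⁅(⊤ : Subgroup G), frattini G⁆ ≤ derivedIn M := by
  haveI : Fact p.Prime := ⟨hp⟩
  haveI : Group.IsNilpotent G := hpG.isNilpotent
  haveI hMn : M.Normal :=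
    Subgroup.NormalizerCondition.normal_of_coatom M normalizerCondition_of_isNilpotent hM
  have hidx : M.index = p := index_eq_prime_of_coatom hp hpG hM
  have hcard : Nat.card (G ⧸ M) = p := by rw [← Subgroup.index_eq_card]; exact hidx
  haveI : IsCyclic (G ⧸ M) := isCyclic_of_prime_card hcard
  have hEA : IsElementaryAbelian p (G ⧸ M) := by
    constructor
    · letI := IsCyclic.commGroup (α := G ⧸ M)
      exact fun a b => mul_comm a b
    · intro a
      rw [← hcard]
      exact pow_card_eq_one'
  obtain ⟨φ, hφ, ⟨e⟩⟩ := hea M hMn (Or.inr hEA)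
  have hker : Nat.card φ.ker = p := by rw [← Nat.card_congr e.toEquiv]; exact hcard
  set ψ : G →* G := M.subtype.comp φ with hψ
  have hmapφtop : Subgroup.map φ ⊤ = ⊤ := by
    rw [← MonoidHom.range_eq_map, MonoidHom.range_eq_top]
    exact hφ
  set C := derivedIn M with hCdef
  have hMcomm : commutator ↥M = Subgroup.map φ (commutator G) := by
    rw [commutator_def, commutator_def, Subgroup.map_commutator, hmapφtop]
  have hC : C = Subgroup.map ψ (commutator G) := by
    rw [hCdef, derivedIn, hMcomm, Subgroup.map_map, ← hψ]
  have hCM : C = ⁅M, M⁆ := derivedIn_eq M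
  have hCle : C ≤ commutator G := by
    rw [hCM, commutator_def]
    exact Subgroup.commutator_mono le_top le_top
  haveI hCnormal : C.Normal := by rw [hCM]; infer_instance
  set G' := commutator G with hG'def
  -- first cardinality relation : |G'| = |C| * |ker ρ|, with |ker ρ| dividing p
  set ρ : ↥G' →* G := ψ.comp G'.subtype with hρ
  have hρrange : ρ.range = C := by
    rw [hρ, MonoidHom.range_comp, Subgroup.range_subtype, ← hC]
  have hcard1 : Nat.card G' = Nat.card C * Nat.card ρ.ker := by
    rw [Subgroup.card_eq_card_quotient_mul_card_subgroup ρ.ker,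
      Nat.card_congr (QuotientGroup.quotientKerEquivRange ρ).toEquiv, hρrange]
  have hρker : Nat.card ρ.ker ∣ p := by
    have hle : (ρ.ker.map G'.subtype) ≤ φ.ker := by
      rintro _ ⟨z, hz, rfl⟩
      have hz' : ψ (G'.subtype z) = 1 := hz
      rw [hψ, MonoidHom.comp_apply] at hz'
      have : φ (G'.subtype z) = 1 := by
        have := Subgroup.subtype_injective M (a₁ := φ (G'.subtype z)) (a₂ := 1)
        exact this (by simpa using hz')
      exact this
    calc Nat.card ρ.ker
        = Nat.card (ρ.ker.map G'.subtype) :=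
          Nat.card_congr (Subgroup.equivMapOfInjective _ _ (Subgroup.subtype_injective G')).toEquiv
      _ ∣ Nat.card φ.ker := Subgroup.card_dvd_of_le hle
      _ = p := by rw [hker]
  -- second cardinality relation : |G'| = |D| * |C|
  set π := QuotientGroup.mk' C with hπ
  set D := Subgroup.map π G' with hDdef
  have hmapπtop : Subgroup.map π ⊤ = ⊤ := by
    rw [← MonoidHom.range_eq_map, MonoidHom.range_eq_top]
    exact QuotientGroup.mk'_surjective C
  have hcard2 : Nat.card G' = Nat.card D * Nat.card C := by
    set σ : ↥G' →* G ⧸ C := π.comp G'.subtype with hσ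
    have hσr : σ.range = D := by
      rw [hσ, MonoidHom.range_comp, Subgroup.range_subtype, hDdef]
    have hker' : σ.ker = Subgroup.comap G'.subtype C := by
      conv_rhs => rw [← QuotientGroup.ker_mk' C]
      rw [MonoidHom.comap_ker, hσ, hπ]
    have hσk : Nat.card σ.ker = Nat.card C := by
      rw [hker']
      exact Nat.card_congr (Subgroup.subgroupOfEquivOfLe hCle).toEquiv
    rw [Subgroup.card_eq_card_quotient_mul_card_subgroup σ.ker,
      Nat.card_congr (QuotientGroup.quotientKerEquivRange σ).toEquiv, hσr, hσk]
  have hDdvd : Nat.card D ∣ p := by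
    have hpos : 0 < Nat.card C := Nat.card_pos
    have heq : Nat.card D * Nat.card C = Nat.card ρ.ker * Nat.card C := by
      rw [← hcard2, hcard1, Nat.mul_comm]
    have : Nat.card D = Nat.card ρ.ker := Nat.eq_of_mul_eq_mul_right hpos heq
    rw [this]
    exact hρker
  -- D is the commutator subgroup of the quotient, of order dividing p
  have hDp : ∀ x ∈ D, x ^ p = 1 := by
    intro x hx
    obtain ⟨k, hk⟩ := hDdvd
    have h1 : (⟨x, hx⟩ : ↥D) ^ Nat.card D = 1 := pow_card_eq_one'
    have h2 : x ^ Nat.card ↥D = 1 := by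
      have h3 : (((⟨x, hx⟩ : ↥D) ^ Nat.card ↥D : ↥D) : G ⧸ C) = ((1 : ↥D) : G ⧸ C) := by
        rw [h1]
      rw [SubmonoidClass.coe_pow, OneMemClass.coe_one] at h3
      exact h3
    rw [hk, pow_mul, h2, one_pow]
  have hDc : D ≤ Subgroup.center (G ⧸ C) := by
    rcases hp.eq_one_or_self_of_dvd _ hDdvd with h1 | hP
    · rw [Subgroup.card_eq_one] at h1
      rw [h1]
      exact bot_le
    · haveI hG'n : G'.Normal := by rw [hG'def, commutator_def]; infer_instance
      haveI : D.Normal := Subgroup.Normal.map hG'n π (QuotientGroup.mk'_surjective C)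
      exact le_center_of_card_eq_prime hp (hpG.to_quotient C) hP
  -- the subgroup N := π⁻¹(Z(G/C)) has elementary abelian quotient
  set Nsub := Subgroup.comap π (Subgroup.center (G ⧸ C)) with hNdef
  haveI : Nsub.Normal := Subgroup.normal_comap π
  have h1 : ∀ g h : G, ⁅g, h⁆ ∈ Nsub := by
    intro g h
    have hc : ⁅g, h⁆ ∈ G' := by
      rw [hG'def, commutator_def]
      exact Subgroup.commutator_mem_commutator (Subgroup.mem_top _) (Subgroup.mem_top _)
    exact Subgroup.mem_comap.mpr (hDc (Subgroup.mem_map_of_mem π hc))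
  have h2 : ∀ g : G, g ^ p ∈ Nsub := by
    intro g
    rw [hNdef, Subgroup.mem_comap, map_pow, Subgroup.mem_center_iff]
    intro y
    obtain ⟨h, rfl⟩ := QuotientGroup.mk'_surjective C y
    set x := π g with hxdef
    set d := ⁅x⁻¹, π h⁆ with hd
    have hdD : d ∈ D := by
      have hED : d = π ⁅g⁻¹, h⁆ := by rw [map_commutatorElement, map_inv]
      rw [hED, hDdef]
      refine Subgroup.mem_map_of_mem π ?_
      rw [hG'def, commutator_def]
      exact Subgroup.commutator_mem_commutator (Subgroup.mem_top _) (Subgroup.mem_top _)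
    have hdc : Commute x d := Subgroup.mem_center_iff.mp (hDc hdD) x
    have hdp : d ^ p = 1 := hDp d hdD
    have hconj : (π h) * x * (π h)⁻¹ = x * d := by rw [hd]; group
    have hkey : (π h) * x ^ p * (π h)⁻¹ = x ^ p := by
      rw [← conj_pow, hconj, hdc.mul_pow, hdp, mul_one]
    calc π h * x ^ p = (π h * x ^ p * (π h)⁻¹) * π h := by group
      _ = x ^ p * π h := by rw [hkey]
  have hquot_comm : ∀ a b : G ⧸ Nsub, a * b = b * a := by
    intro a b
    obtain ⟨g, rfl⟩ := QuotientGroup.mk_surjective a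
    obtain ⟨h, rfl⟩ := QuotientGroup.mk_surjective b
    rw [← QuotientGroup.mk_mul, ← QuotientGroup.mk_mul]
    refine QuotientGroup.eq.mpr ?_
    have : (g * h)⁻¹ * (h * g) = ⁅h⁻¹, g⁻¹⁆ := by group
    rw [this]
    exact h1 h⁻¹ g⁻¹
  have hquot_exp : ∀ a : G ⧸ Nsub, a ^ p = 1 := by
    intro a
    obtain ⟨g, rfl⟩ := QuotientGroup.mk_surjective a
    rw [← QuotientGroup.mk_pow, QuotientGroup.eq_one_iff]
    exact h2 g
  have hfr : frattini G ≤ Nsub :=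
    frattini_le_of_elementaryAbelian_quotient hp Nsub hquot_comm hquot_exp
  rw [Subgroup.commutator_le]
  intro g _ f hf
  have hfc : π f ∈ Subgroup.center (G ⧸ C) := Subgroup.mem_comap.mp (hfr hf)
  have hone : π ⁅g, f⁆ = 1 := by
    rw [map_commutatorElement]
    exact commutatorElement_eq_one_iff_commute.mpr (Subgroup.mem_center_iff.mp hfc (π g))
  exact (QuotientGroup.eq_one_iff _).mp hone

end Auxiliary

/-- Let `G` be a finite nonabelian ea-morphic `p`-group and
`K = ⋂ {M' : M maximal subgroup of G}`. Then `[G, Φ(G)] ≤ K`; in particular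
`Φ(G)' ≤ K`. -/
theorem commutator_frattini_le_K (p : ℕ) (hp : p.Prime) (G : Type*) [Group G] [Finite G]
    (hpG : IsPGroup p G) (hea : IsEAMorphic p G) (hnab : ¬ ∀ a b : G, a * b = b * a) :
    (⁅(⊤ : Subgroup G), frattini G⁆ ≤ ⨅ (M : Subgroup G) (_ : IsCoatom M), derivedIn M) ∧
      (derivedIn (frattini G) ≤ ⨅ (M : Subgroup G) (_ : IsCoatom M), derivedIn M) := by
  have hmain : ⁅(⊤ : Subgroup G), frattini G⁆ ≤
      ⨅ (M : Subgroup G) (_ : IsCoatom M), derivedIn M :=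
    le_iInf fun M => le_iInf fun hM => commutator_frattini_le_derivedIn hp hpG hea hM
  refine ⟨hmain, le_trans ?_ hmain⟩
  rw [derivedIn_eq]
  exact Subgroup.commutator_mono le_top le_rfl
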